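/- The function f(x,y) can be written in the single-integral forms f(x,y) = 1 − ∫_0^∞ g_x(η)·Q₁(√y, √η) dη and also f(x,y) = ∫_0^∞ g_y(η)·Q₁(√x, √η) dη, where Q₁ is the first-order Marcum Q-function. -/

import Mathlib

open MeasureTheory Real Set

/-- Modified Bessel function of the first kind of order zero. -/
noncomputable def besselI0 (z : ℝ) : ℝ := ∑' k : ℕ, (z ^ 2 / 4) ^ k / ((Nat.factorial k : ℝ)) ^ 2

/-- Density of the noncentral chi-square distribution with 2 degrees of freedom
and noncentrality parameter `x`, evaluated at `η`. -/
noncomputable def g (x η : ℝ) : ℝ :=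
  (1 / 2) * Real.exp (-(x + η) / 2) * besselI0 (Real.sqrt (x * η))

/-- The Bayesian comparison function `f(x,y) = ∫∫_{η > ν ≥ 0} g_x(η) g_y(ν) dη dν`. -/
noncomputable def fcomp (x y : ℝ) : ℝ :=
  ∫ η in Set.Ioi (0 : ℝ), g x η * (∫ ν in (0 : ℝ)..η, g y ν)

/-- The first-order Marcum Q-function. -/
noncomputable def marcumQ1 (a b : ℝ) : ℝ :=
  ∫ t in Set.Ioi b, t * Real.exp (-(t ^ 2 + a ^ 2) / 2) * besselI0 (a * t)

/-- The Laguerre polynomial of degree `m`. -/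
noncomputable def laguerre (m : ℕ) (z : ℝ) : ℝ :=
  ∑ k ∈ Finset.range (m + 1), (Nat.choose m k : ℝ) * (-z) ^ k / (Nat.factorial k : ℝ)

lemma besselI0_summable (z : ℝ) :
    Summable (fun k : ℕ => (z ^ 2 / 4) ^ k / ((Nat.factorial k : ℝ)) ^ 2) := by
  refine Summable.of_nonneg_of_le (fun k => by positivity) (fun k => ?_)
    (Real.summable_pow_div_factorial (z ^ 2 / 4))
  have h1 : (1 : ℝ) ≤ (Nat.factorial k : ℝ) := by
    exact_mod_cast Nat.one_le_iff_ne_zero.mpr k.factorial_ne_zero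
  gcongr <;> first | positivity | nlinarith

lemma besselI0_nonneg (z : ℝ) : 0 ≤ besselI0 z :=
  tsum_nonneg (fun k => by positivity)

lemma fact_two_mul_le (k : ℕ) : ((2 * k).factorial : ℕ) ≤ 4 ^ k * (k.factorial) ^ 2 := by
  induction k with
  | zero => simp
  | succ n ih =>
    have h1 : 2 * (n + 1) = (2 * n + 1) + 1 := by ring
    rw [h1, Nat.factorial_succ, Nat.factorial_succ]
    calc (2 * n + 1 + 1) * ((2 * n + 1) * (2 * n).factorial)
        ≤ (2 * n + 2) * ((2 * n + 2) * (4 ^ n * n.factorial ^ 2)) := by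
          apply Nat.mul_le_mul_left
          exact Nat.mul_le_mul (by omega) ih
      _ ≤ 4 ^ (n + 1) * ((n + 1) * n.factorial) ^ 2 := by ring_nf; omega

lemma besselI0_le_exp {z : ℝ} (hz : 0 ≤ z) : besselI0 z ≤ Real.exp z := by
  have h1 : besselI0 z ≤ Real.cosh z := by
    rw [Real.cosh_eq_tsum]
    refine Summable.tsum_le_tsum (fun k => ?_) (besselI0_summable z) (Real.hasSum_cosh z).summable
    have h2 : (z ^ 2 / 4) ^ k / ((Nat.factorial k : ℝ)) ^ 2
        = z ^ (2 * k) / (4 ^ k * ((Nat.factorial k : ℝ)) ^ 2) := by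
      rw [pow_mul, div_pow, div_div]
    rw [h2]
    rw [pow_mul]
    gcongr <;> first | positivity | exact_mod_cast fact_two_mul_le k
  refine h1.trans ?_
  rw [Real.cosh_eq]
  have : Real.exp (-z) ≤ Real.exp z := Real.exp_le_exp.mpr (by linarith)
  linarith

lemma measurable_besselI0 : Measurable besselI0 := by
  have : ∀ n : ℕ, Measurable (fun z : ℝ =>
      ∑ k ∈ Finset.range n, (z ^ 2 / 4) ^ k / ((Nat.factorial k : ℝ)) ^ 2) := by
    intro n
    apply Finset.measurable_sum
    intro k _
    fun_prop
  refine measurable_of_tendsto_metrizable this ?_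
  rw [tendsto_pi_nhds]
  intro z
  exact (besselI0_summable z).hasSum.tendsto_sum_nat

lemma measurable_g (x : ℝ) : Measurable (g x) := by
  unfold g
  have h : Measurable (fun η : ℝ => besselI0 (Real.sqrt (x * η))) :=
    measurable_besselI0.comp (((measurable_const.mul measurable_id' :
      Measurable (fun η : ℝ => x * η))).sqrt)
  fun_prop

lemma g_nonneg (x η : ℝ) : 0 ≤ g x η := by
  unfold g
  have := besselI0_nonneg (Real.sqrt (x * η))
  positivity

lemma g_le {x : ℝ} (hx : 0 ≤ x) {η : ℝ} (hη : 0 ≤ η) :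
    g x η ≤ (1 / 2) * Real.exp (x / 2) * Real.exp (-η / 4) := by
  unfold g
  have hsq : Real.sqrt (x * η) ≤ x + η / 4 := by
    rw [Real.sqrt_mul hx]
    have h2 := two_mul_le_add_sq (Real.sqrt x) (Real.sqrt η / 2)
    have hx2 : Real.sqrt x ^ 2 = x := Real.sq_sqrt hx
    have hη2 : Real.sqrt η ^ 2 = η := Real.sq_sqrt hη
    nlinarith [Real.sqrt_nonneg x, Real.sqrt_nonneg η]
  have h1 : besselI0 (Real.sqrt (x * η)) ≤ Real.exp (x + η / 4) :=
    (besselI0_le_exp (Real.sqrt_nonneg _)).trans (Real.exp_le_exp.mpr hsq)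
  have h2 : (0:ℝ) < Real.exp (-(x + η) / 2) := Real.exp_pos _
  calc (1 / 2) * Real.exp (-(x + η) / 2) * besselI0 (Real.sqrt (x * η))
      ≤ (1 / 2) * Real.exp (-(x + η) / 2) * Real.exp (x + η / 4) := by
        apply mul_le_mul_of_nonneg_left h1 (by positivity)
    _ = (1 / 2) * Real.exp (x / 2) * Real.exp (-η / 4) := by
        rw [mul_assoc, mul_assoc, ← Real.exp_add, ← Real.exp_add]
        ring_nf

lemma integrableOn_g {x : ℝ} (hx : 0 ≤ x) {c : ℝ} (hc : 0 ≤ c) :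
    IntegrableOn (g x) (Ioi c) := by
  refine Integrable.mono' (g := fun η => (1 / 2) * Real.exp (x / 2) * Real.exp (-(1/4) * η)) ?_
    ((measurable_g x).aestronglyMeasurable) ?_
  · exact ((exp_neg_integrableOn_Ioi c (by norm_num : (0:ℝ) < 1/4)).const_mul _)
  · filter_upwards [ae_restrict_mem measurableSet_Ioi] with η hη
    rw [Real.norm_eq_abs, abs_of_nonneg (g_nonneg x η)]
    have : -(1/4 : ℝ) * η = -η / 4 := by ring
    rw [this]
    exact g_le hx (hc.trans (le_of_lt hη))

lemma sq_image_Ioi {c : ℝ} (hc : 0 ≤ c) :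
    (fun t : ℝ => t ^ 2) '' Ioi (Real.sqrt c) = Ioi c := by
  ext η
  constructor
  · rintro ⟨t, ht, rfl⟩
    have h0 : Real.sqrt c ≥ 0 := Real.sqrt_nonneg c
    have : c = Real.sqrt c ^ 2 := (Real.sq_sqrt hc).symm
    rw [mem_Ioi] at ht ⊢
    simp only
    nlinarith
  · intro hη
    rw [mem_Ioi] at hη
    have hη0 : 0 ≤ η := hc.trans hη.le
    exact ⟨Real.sqrt η, Real.sqrt_lt_sqrt hc hη, Real.sq_sqrt hη0⟩

lemma integral_g_Ioi {x : ℝ} (hx : 0 ≤ x) {c : ℝ} (hc : 0 ≤ c) :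
    (∫ η in Ioi c, g x η) = marcumQ1 (Real.sqrt x) (Real.sqrt c) := by
  have hs : MeasurableSet (Ioi (Real.sqrt c)) := measurableSet_Ioi
  have hderiv : ∀ t ∈ Ioi (Real.sqrt c),
      HasDerivWithinAt (fun t : ℝ => t ^ 2) (2 * t) (Ioi (Real.sqrt c)) t := by
    intro t _
    simpa using (hasDerivAt_pow 2 t).hasDerivWithinAt
  have hinj : InjOn (fun t : ℝ => t ^ 2) (Ioi (Real.sqrt c)) := by
    intro a ha b hb hab
    have ha0 : 0 ≤ a := (Real.sqrt_nonneg c).trans (le_of_lt ha)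
    have hb0 : 0 ≤ b := (Real.sqrt_nonneg c).trans (le_of_lt hb)
    calc a = Real.sqrt (a ^ 2) := (Real.sqrt_sq ha0).symm
      _ = Real.sqrt (b ^ 2) := by simp only at hab; rw [hab]
      _ = b := Real.sqrt_sq hb0
  have key := integral_image_eq_integral_abs_deriv_smul hs hderiv hinj (g x)
  rw [sq_image_Ioi hc] at key
  rw [key, marcumQ1]
  refine setIntegral_congr_fun measurableSet_Ioi (fun t ht => ?_)
  have ht0 : 0 < t := lt_of_le_of_lt (Real.sqrt_nonneg c) ht
  have h1 : Real.sqrt (x * t ^ 2) = Real.sqrt x * t := by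
    rw [Real.sqrt_mul hx, Real.sqrt_sq ht0.le]
  have h2 : (Real.sqrt x) ^ 2 = x := Real.sq_sqrt hx
  rw [smul_eq_mul]
  unfold g
  rw [h1, h2, abs_of_pos (by linarith : (0:ℝ) < 2 * t)]
  ring_nf

lemma integral_pow_odd_exp (k : ℕ) :
    (∫ t in Ioi (0:ℝ), t ^ (2 * k + 1) * Real.exp (-(1/2) * t ^ 2))
      = 2 ^ k * (Nat.factorial k : ℝ) := by
  have h := integral_rpow_mul_exp_neg_mul_rpow (p := 2) (q := ((2 * k + 1 : ℕ) : ℝ))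
    (b := 1/2) (by norm_num) (by have := Nat.cast_nonneg (α:=ℝ) k; push_cast; linarith) (by norm_num)
  have hL : (∫ x in Ioi (0:ℝ), x ^ ((2 * k + 1 : ℕ) : ℝ) * Real.exp (-(1/2) * x ^ (2:ℝ)))
      = ∫ t in Ioi (0:ℝ), t ^ (2 * k + 1) * Real.exp (-(1/2) * t ^ 2) := by
    refine setIntegral_congr_fun measurableSet_Ioi (fun t ht => ?_)
    rw [Real.rpow_natCast, show ((2:ℝ)) = ((2:ℕ):ℝ) by norm_num, Real.rpow_natCast]
  rw [hL] at h
  rw [h]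
  have he : (-(((2 * k + 1 : ℕ) : ℝ) + 1) / 2) = -((k : ℝ) + 1) := by push_cast; ring
  have hg : ((((2 * k + 1 : ℕ) : ℝ)) + 1) / 2 = (k : ℝ) + 1 := by push_cast; ring
  rw [he, hg, Real.Gamma_nat_eq_factorial]
  have hb : ((1/2 : ℝ)) ^ (-((k : ℝ) + 1)) = 2 ^ ((k : ℝ) + 1) := by
    rw [Real.rpow_neg (by norm_num), one_div, Real.inv_rpow (by norm_num), inv_inv]
  rw [hb]
  have h2 : (2:ℝ) ^ ((k : ℝ) + 1) = 2 ^ (k + 1) := by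
    rw [show ((k:ℝ) + 1) = ((k + 1 : ℕ) : ℝ) by push_cast; ring, Real.rpow_natCast]
  rw [h2, pow_succ]
  ring

lemma marcumQ1_zero {a : ℝ} (ha : 0 ≤ a) : marcumQ1 a 0 = 1 := by
  set F : ℕ → ℝ → ℝ := fun k t =>
    (Real.exp (-(a^2)/2) * (a^2/4)^k / ((Nat.factorial k : ℝ))^2) *
      (t ^ (2*k+1) * Real.exp (-(1/2) * t^2)) with hF
  have hpt : ∀ t : ℝ, t * Real.exp (-(t ^ 2 + a ^ 2) / 2) * besselI0 (a * t)
      = ∑' k, F k t := by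
    intro t
    unfold besselI0
    rw [mul_comm (t * Real.exp (-(t ^ 2 + a ^ 2) / 2)), ← tsum_mul_right]
    congr 1
    funext k
    rw [hF]
    simp only
    rw [mul_pow, show -(t ^ 2 + a ^ 2) / 2 = (-(1/2) * t^2) + (-(a^2)/2) by ring,
      Real.exp_add, show (a^2 * t^2 / 4) = (a^2/4) * t^2 by ring, mul_pow, ← pow_mul]
    ring
  have hFint : ∀ k, IntegrableOn (F k) (Ioi (0:ℝ)) := by
    intro k
    have hq : (-1:ℝ) < ((2*k+1 : ℕ) : ℝ) := by
      have := Nat.cast_nonneg (α:=ℝ) k; push_cast; linarith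
    have hi := integrableOn_rpow_mul_exp_neg_mul_sq (b := 1/2) (by norm_num) hq
    have hi2 : IntegrableOn (fun t : ℝ => t ^ (2*k+1) * Real.exp (-(1/2) * t^2))
        (Ioi (0:ℝ)) := by
      refine hi.congr_fun (fun t _ => ?_) measurableSet_Ioi
      beta_reduce; rw [Real.rpow_natCast]
    exact hi2.const_mul _
  have hFval : ∀ k, (∫ t in Ioi (0:ℝ), F k t)
      = Real.exp (-(a^2)/2) * (a^2/2)^k / ((Nat.factorial k : ℝ)) := by
    intro k
    rw [hF]
    simp only
    rw [MeasureTheory.integral_const_mul, integral_pow_odd_exp k]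
    have hkf : ((Nat.factorial k : ℝ)) ≠ 0 := by
      exact_mod_cast k.factorial_ne_zero
    rw [show (a^2/4) = (a^2/2)/2 by ring, div_pow]
    have h2 : ((2:ℝ))^k ≠ 0 := by positivity
    field_simp
  have hFnorm : ∀ k, (∫ t in Ioi (0:ℝ), ‖F k t‖)
      = Real.exp (-(a^2)/2) * (a^2/2)^k / ((Nat.factorial k : ℝ)) := by
    intro k
    rw [← hFval k]
    refine setIntegral_congr_fun measurableSet_Ioi (fun t ht => ?_)
    rw [Real.norm_eq_abs, abs_of_nonneg]
    rw [hF]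
    simp only
    have ht0 : (0:ℝ) ≤ t := le_of_lt ht
    positivity
  have hsum : Summable (fun k => ∫ t in Ioi (0:ℝ), ‖F k t‖) := by
    simp_rw [hFnorm]
    simp_rw [mul_div_assoc]
    exact (Real.summable_pow_div_factorial (a^2/2)).mul_left _
  have hswap := MeasureTheory.integral_tsum_of_summable_integral_norm hFint hsum
  rw [marcumQ1]
  have : (∫ t in Ioi (0:ℝ), t * Real.exp (-(t ^ 2 + a ^ 2) / 2) * besselI0 (a * t))
      = ∫ t in Ioi (0:ℝ), ∑' k, F k t := by
    refine setIntegral_congr_fun measurableSet_Ioi (fun t _ => hpt t)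
  rw [this, ← hswap]
  simp_rw [hFval, mul_div_assoc]
  rw [tsum_mul_left]
  have hexp : ∑' k : ℕ, (a^2/2)^k / ((Nat.factorial k : ℝ)) = Real.exp (a^2/2) := by
    rw [Real.exp_eq_exp_ℝ, NormedSpace.exp_eq_tsum_div]
  rw [hexp, ← Real.exp_add, show -a^2/2 + a^2/2 = 0 by ring, Real.exp_zero]

lemma integral_g_total {x : ℝ} (hx : 0 ≤ x) : (∫ η in Ioi (0:ℝ), g x η) = 1 := by
  have h := integral_g_Ioi hx (le_refl (0:ℝ))
  rw [Real.sqrt_zero] at h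
  rw [h, marcumQ1_zero (Real.sqrt_nonneg x)]

noncomputable def Gfun (y : ℝ) (η : ℝ) : ℝ := ∫ ν in Ioc (0:ℝ) η, g y ν

lemma Gfun_monotone {y : ℝ} (hy : 0 ≤ y) : Monotone (Gfun y) := by
  intro a b hab
  unfold Gfun
  by_cases hb : 0 < b
  · refine setIntegral_mono_set ((integrableOn_g hy le_rfl).mono_set Ioc_subset_Ioi_self) ?_ ?_
    · filter_upwards with ν using g_nonneg y ν
    · exact HasSubset.Subset.eventuallyLE (Ioc_subset_Ioc_right hab)
  · rw [Set.Ioc_eq_empty hb, Set.Ioc_eq_empty (fun h => hb (lt_of_lt_of_le h hab))]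

lemma Gfun_nonneg {y : ℝ} (η : ℝ) : 0 ≤ Gfun y η :=
  setIntegral_nonneg measurableSet_Ioc (fun ν _ => g_nonneg y ν)

lemma Gfun_le_one {y : ℝ} (hy : 0 ≤ y) (η : ℝ) : Gfun y η ≤ 1 := by
  rw [← integral_g_total hy]
  refine setIntegral_mono_set (integrableOn_g hy le_rfl) ?_ ?_
  · filter_upwards with ν using g_nonneg y ν
  · exact HasSubset.Subset.eventuallyLE Ioc_subset_Ioi_self

lemma Gfun_split {y : ℝ} (hy : 0 ≤ y) {η : ℝ} (hη : 0 < η) :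
    Gfun y η = 1 - marcumQ1 (Real.sqrt y) (Real.sqrt η) := by
  have hsplit : (∫ ν in Ioi (0:ℝ), g y ν)
      = (∫ ν in Ioc (0:ℝ) η, g y ν) + ∫ ν in Ioi η, g y ν := by
    rw [← Ioc_union_Ioi_eq_Ioi hη.le]
    exact setIntegral_union (Ioc_disjoint_Ioi le_rfl) measurableSet_Ioi
      ((integrableOn_g hy le_rfl).mono_set Ioc_subset_Ioi_self) (integrableOn_g hy hη.le)
  rw [integral_g_total hy, integral_g_Ioi hy hη.le] at hsplit
  unfold Gfun
  linarith

lemma marcumQ1_eq_integral_g {x : ℝ} (hx : 0 ≤ x) {η : ℝ} (hη : 0 ≤ η) :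
    marcumQ1 (Real.sqrt x) (Real.sqrt η) = ∫ ν in Ioi η, g x ν :=
  (integral_g_Ioi hx hη).symm

lemma intervalIntegral_eq_Gfun {y : ℝ} {η : ℝ} (hη : 0 ≤ η) :
    (∫ ν in (0:ℝ)..η, g y ν) = Gfun y η := by
  rw [intervalIntegral.integral_of_le hη, Gfun]

lemma measurable_Gfun {y : ℝ} (hy : 0 ≤ y) : Measurable (Gfun y) :=
  (Gfun_monotone hy).measurable

lemma fubini_key {x y : ℝ} (hx : 0 ≤ x) (hy : 0 ≤ y) :
    (∫ η in Ioi (0:ℝ), g x η * Gfun y η)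
      = ∫ ν in Ioi (0:ℝ), g y ν * (∫ η in Ioi ν, g x η) := by
  set s : Set (ℝ × ℝ) := {p : ℝ × ℝ | 0 < p.2 ∧ p.2 ≤ p.1} with hs
  have hms : MeasurableSet s := by
    apply MeasurableSet.inter
    · exact measurableSet_lt measurable_const measurable_snd
    · exact measurableSet_le measurable_snd measurable_fst
  set f : ℝ → ℝ → ℝ := fun η ν => s.indicator (fun p => g x p.1 * g y p.2) (η, ν) with hf
  have hfm : Measurable (Function.uncurry f) := by
    have : Function.uncurry f = s.indicator (fun p => g x p.1 * g y p.2) := by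
      funext p
      simp [Function.uncurry, hf]
    rw [this]
    exact Measurable.indicator (((measurable_g x).comp measurable_fst).mul
      ((measurable_g y).comp measurable_snd)) hms
  -- integrability of the uncurried function
  have hbound : Integrable (fun p : ℝ × ℝ =>
      ((Ioi (0:ℝ)).indicator (fun t => (1/2) * Real.exp (x/2) * Real.exp (-(1/4) * t)) p.1) *
      ((Ioi (0:ℝ)).indicator (fun t => (1/2) * Real.exp (y/2) * Real.exp (-(1/4) * t)) p.2))
      (volume.prod volume) := by
    have hone : ∀ c : ℝ, IntegrableOn (fun t : ℝ => (1/2) * Real.exp (c/2) *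
        Real.exp (-(1/4) * t)) (Ioi (0:ℝ)) volume :=
      fun c => (exp_neg_integrableOn_Ioi (0:ℝ) (by norm_num : (0:ℝ) < 1/4)).const_mul _
    exact Integrable.mul_prod ((hone x).integrable_indicator measurableSet_Ioi)
      ((hone y).integrable_indicator measurableSet_Ioi)
  have hint : Integrable (Function.uncurry f) (volume.prod volume) := by
    refine hbound.mono' hfm.aestronglyMeasurable ?_
    filter_upwards with p
    rw [Function.uncurry, hf]
    simp only
    by_cases hp : (p.1, p.2) ∈ s
    · rw [Set.indicator_of_mem hp]
      obtain ⟨h1, h2⟩ := hp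
      simp only at h1 h2
      have hp1 : (0:ℝ) < p.1 := lt_of_lt_of_le h1 h2
      rw [Set.indicator_of_mem (mem_Ioi.mpr hp1), Set.indicator_of_mem (mem_Ioi.mpr h1)]
      rw [Real.norm_eq_abs, abs_of_nonneg (mul_nonneg (g_nonneg x p.1) (g_nonneg y p.2))]
      have b1 := g_le hx hp1.le
      have b2 := g_le hy h1.le
      have e1 : -(1/4 : ℝ) * p.1 = -p.1/4 := by ring
      have e2 : -(1/4 : ℝ) * p.2 = -p.2/4 := by ring
      rw [e1, e2]
      exact mul_le_mul b1 b2 (g_nonneg y p.2) (by positivity)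
    · rw [Set.indicator_of_notMem hp]
      simp only [norm_zero]
      apply mul_nonneg <;>
      · apply Set.indicator_nonneg
        intro t _
        positivity
  have hswap := MeasureTheory.integral_integral_swap hint
  -- evaluate the left side
  have hL : (∫ η : ℝ, ∫ ν : ℝ, f η ν) = ∫ η in Ioi (0:ℝ), g x η * Gfun y η := by
    have h1 : ∀ η : ℝ, (∫ ν : ℝ, f η ν) = g x η * Gfun y η := by
      intro η
      have : (fun ν => f η ν) = (Ioc (0:ℝ) η).indicator (fun ν => g x η * g y ν) := by
        funext ν
        rw [hf]
        simp only
        by_cases hν : ν ∈ Ioc (0:ℝ) η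
        · rw [Set.indicator_of_mem hν,
            Set.indicator_of_mem (show (η, ν) ∈ s from ⟨hν.1, hν.2⟩)]
        · rw [Set.indicator_of_notMem hν, Set.indicator_of_notMem]
          intro hmem
          exact hν ⟨hmem.1, hmem.2⟩
      rw [this, MeasureTheory.integral_indicator measurableSet_Ioc,
        MeasureTheory.integral_const_mul, Gfun]
    simp_rw [h1]
    refine (setIntegral_eq_integral_of_forall_compl_eq_zero (fun η hη => ?_)).symm
    have hη' : η ≤ 0 := not_lt.mp (by simpa using hη)
    unfold Gfun
    rw [Set.Ioc_eq_empty (fun h => absurd (lt_of_lt_of_le h hη') (lt_irrefl 0)), MeasureTheory.setIntegral_empty,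
      mul_zero]
  -- evaluate the right side
  have hR : (∫ ν : ℝ, ∫ η : ℝ, f η ν) = ∫ ν in Ioi (0:ℝ), g y ν * (∫ η in Ioi ν, g x η) := by
    have h1 : ∀ ν : ℝ, 0 < ν → (∫ η : ℝ, f η ν) = g y ν * (∫ η in Ioi ν, g x η) := by
      intro ν hν
      have : (fun η => f η ν) = (Ici ν).indicator (fun η => g x η * g y ν) := by
        funext η
        rw [hf]
        simp only
        by_cases hη : η ∈ Ici ν
        · rw [Set.indicator_of_mem hη,
            Set.indicator_of_mem (show (η, ν) ∈ s from ⟨hν, hη⟩)]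
        · rw [Set.indicator_of_notMem hη, Set.indicator_of_notMem]
          intro hmem
          exact hη hmem.2
      rw [this, MeasureTheory.integral_indicator measurableSet_Ici,
        MeasureTheory.integral_mul_const, integral_Ici_eq_integral_Ioi, mul_comm]
    have h2 : ∀ ν : ℝ, ν ≤ 0 → (∫ η : ℝ, f η ν) = 0 := by
      intro ν hν
      have : (fun η => f η ν) = fun _ => (0:ℝ) := by
        funext η
        rw [hf]
        simp only
        exact Set.indicator_of_notMem (fun hmem => absurd hmem.1 (not_lt.mpr hν)) _
      rw [this, integral_const, smul_zero]
    have heq : (fun ν : ℝ => ∫ η : ℝ, f η ν)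
        = (Ioi (0:ℝ)).indicator (fun ν => g y ν * ∫ η in Ioi ν, g x η) := by
      funext ν
      by_cases hν : 0 < ν
      · rw [Set.indicator_of_mem (mem_Ioi.mpr hν)]
        exact h1 ν hν
      · rw [Set.indicator_of_notMem (by simpa using hν)]
        exact h2 ν (not_lt.mp hν)
    rw [heq, MeasureTheory.integral_indicator measurableSet_Ioi]
  rw [← hL, hswap, hR]

/-- Single-integral forms of f(x,y) via the Marcum Q-function. -/
theorem fcomp_single_integral (x y : ℝ) (hx : 0 ≤ x) (hy : 0 ≤ y) :
    fcomp x y = 1 - ∫ η in Set.Ioi (0 : ℝ), g x η * marcumQ1 (Real.sqrt y) (Real.sqrt η) ∧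
    fcomp x y = ∫ η in Set.Ioi (0 : ℝ), g y η * marcumQ1 (Real.sqrt x) (Real.sqrt η) := by
  have hfcomp : fcomp x y = ∫ η in Ioi (0:ℝ), g x η * Gfun y η := by
    unfold fcomp
    exact setIntegral_congr_fun measurableSet_Ioi
      (fun η hη => by rw [intervalIntegral_eq_Gfun (le_of_lt hη)])
  have hGint : IntegrableOn (fun η => g x η * Gfun y η) (Ioi (0:ℝ)) := by
    refine Integrable.mono' (integrableOn_g hx le_rfl)
      (((measurable_g x).mul (measurable_Gfun hy)).aestronglyMeasurable) ?_
    filter_upwards with η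
    rw [Real.norm_eq_abs, abs_of_nonneg (mul_nonneg (g_nonneg x η) (Gfun_nonneg η))]
    calc g x η * Gfun y η ≤ g x η * 1 :=
          mul_le_mul_of_nonneg_left (Gfun_le_one hy η) (g_nonneg x η)
      _ = g x η := mul_one _
  constructor
  · have h1 : (∫ η in Ioi (0:ℝ), g x η * marcumQ1 (Real.sqrt y) (Real.sqrt η))
        = ∫ η in Ioi (0:ℝ), (g x η - g x η * Gfun y η) := by
      refine setIntegral_congr_fun measurableSet_Ioi (fun η hη => ?_)
      have := Gfun_split hy hη
      have hQ : marcumQ1 (Real.sqrt y) (Real.sqrt η) = 1 - Gfun y η := by linarith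
      rw [hQ]
      ring
    rw [h1, MeasureTheory.integral_sub (integrableOn_g hx le_rfl) hGint,
      integral_g_total hx, ← hfcomp]
    ring
  · rw [hfcomp, fubini_key hx hy]
    refine setIntegral_congr_fun measurableSet_Ioi (fun ν hν => ?_)
    rw [marcumQ1_eq_integral_g hx (le_of_lt hν)]
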